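/- If in addition the k-NN classifier has error P(y^knn ≠ y) ≤ 1/2 (equivalently, λ0 + λ1 ≥ 1 under balanced priors), then the subset error rates satisfy α_S ≤ α_noisy. -/

import Mathlib

open MeasureTheory ProbabilityTheory ENNReal

private lemma ennreal_div_le_div {u s w h : ℝ≥0∞} (hs0 : s ≠ 0) (hst : s ≠ ⊤)
    (hh0 : h ≠ 0) (hht : h ≠ ⊤) (hle : u * h ≤ w * s) : u / s ≤ w / h := by
  rw [ENNReal.div_le_iff_le_mul (Or.inl hs0) (Or.inl hst), div_eq_mul_inv, mul_right_comm,
    ← div_eq_mul_inv, ENNReal.le_div_iff_mul_le (Or.inl hh0) (Or.inl hht)]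
  exact hle

/-- If in addition the k-NN classifier has error `P(y^knn ≠ y) ≤ 1/2`, then the subset
error rate satisfies `α_S ≤ α_noisy`. -/
theorem subset_error_rate_alpha_le
    {Ω : Type*} [MeasurableSpace Ω] (P : Measure Ω) [IsProbabilityMeasure P]
    (y yhat yknn : Ω → Fin 2)
    (hy : Measurable y) (hyhat : Measurable yhat) (hyknn : Measurable yknn)
    -- balanced priors
    (hbal0 : P {ω | y ω = 0} = 1 / 2) (hbal1 : P {ω | y ω = 1} = 1 / 2)
    -- conditional independence given the true label
    (hcondind : ∀ c : Fin 2,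
      P[{ω | yhat ω = 1 ∧ yknn ω = 1} | {ω | y ω = c}]
        = P[{ω | yhat ω = 1} | {ω | y ω = c}] * P[{ω | yknn ω = 1} | {ω | y ω = c}])
    -- positivity of the conditioning events
    (hpos_yhat : P {ω | yhat ω = 1} ≠ 0)
    (hpos_y0 : P {ω | y ω = 0} ≠ 0) (hpos_y1 : P {ω | y ω = 1} ≠ 0)
    (hpos_sub : P {ω | yhat ω = 1 ∧ yknn ω = 1} ≠ 0)
    -- the named quantities
    (αnoisy lam0 lam1 αS : ℝ≥0∞)
    (hαnoisy : αnoisy = P[{ω | y ω = 0} | {ω | yhat ω = 1}])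
    (hlam0 : lam0 = P[{ω | yknn ω = 0} | {ω | y ω = 0}])
    (hlam1 : lam1 = P[{ω | yknn ω = 1} | {ω | y ω = 1}])
    (hαS : αS = P[{ω | y ω = 0} | {ω | yhat ω = 1 ∧ yknn ω = 1}])
    -- the k-NN classifier is no worse than random guessing
    (herr : P {ω | yknn ω ≠ y ω} ≤ 1 / 2) :
    αS ≤ αnoisy := by
  classical
  have fin2 : ∀ x : Fin 2, x = 0 ∨ x = 1 := by decide
  have hY0 : MeasurableSet {ω | y ω = 0} := hy (measurableSet_singleton 0)
  have hY1 : MeasurableSet {ω | y ω = 1} := hy (measurableSet_singleton 1)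
  have hH : MeasurableSet {ω | yhat ω = 1} := hyhat (measurableSet_singleton 1)
  have hK : MeasurableSet {ω | yknn ω = 1} := hyknn (measurableSet_singleton 1)
  have hK0 : MeasurableSet {ω | yknn ω = 0} := hyknn (measurableSet_singleton 0)
  have hS : MeasurableSet {ω | yhat ω = 1 ∧ yknn ω = 1} := hH.inter hK
  have hhalf : ((1:ℝ≥0∞)/2)⁻¹ = 2 := by rw [one_div, inv_inv]
  have htwo : (1:ℝ≥0∞)/2 * 2 = 1 := by
    rw [one_div, ENNReal.inv_mul_cancel] <;> norm_num
  -- masses under conditioning by y = c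
  have hmass0 : ∀ T : Set Ω, P ({ω | y ω = 0} ∩ T) = 1/2 * P[T | {ω | y ω = 0}] := by
    intro T
    rw [cond_apply hY0, hbal0, hhalf, ← mul_assoc, htwo, one_mul]
  have hmass1 : ∀ T : Set Ω, P ({ω | y ω = 1} ∩ T) = 1/2 * P[T | {ω | y ω = 1}] := by
    intro T
    rw [cond_apply hY1, hbal1, hhalf, ← mul_assoc, htwo, one_mul]
  -- splitting a measurable set by the value of y
  have hsplit : ∀ T : Set Ω, MeasurableSet T →
      P T = P ({ω | y ω = 0} ∩ T) + P ({ω | y ω = 1} ∩ T) := by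
    intro T hT
    have hUnion : ({ω | y ω = 0} ∩ T) ∪ ({ω | y ω = 1} ∩ T) = T := by
      ext ω
      rcases fin2 (y ω) with h | h <;> simp [h]
    have hdisj : Disjoint ({ω | y ω = 0} ∩ T) ({ω | y ω = 1} ∩ T) := by
      apply Set.disjoint_left.2
      rintro ω ⟨h0, -⟩ ⟨h1, -⟩
      rw [Set.mem_setOf_eq] at h0 h1
      simp [h0] at h1
    have h := measure_union (μ := P) hdisj (hY1.inter hT)
    rw [hUnion] at h
    exact h
  -- abbreviations
  set a := P[{ω | yhat ω = 1} | {ω | y ω = 0}] with ha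
  set b := P[{ω | yhat ω = 1} | {ω | y ω = 1}] with hb
  set m0 := P[{ω | yknn ω = 1} | {ω | y ω = 0}] with hm0
  set m1 := P[{ω | yknn ω = 1} | {ω | y ω = 1}] with hm1
  set n1 := P[{ω | yknn ω = 0} | {ω | y ω = 1}] with hn1
  -- all conditional quantities are ≤ 1, hence finite
  have hcond_le_one : ∀ (s T : Set Ω), MeasurableSet s → P[T | s] ≤ 1 := by
    intro s T hms
    rw [cond_apply hms]
    rcases eq_or_ne (P s) 0 with h0 | h0
    · have hz : P (s ∩ T) = 0 := measure_mono_null Set.inter_subset_left h0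
      simp [h0, hz]
    · calc (P s)⁻¹ * P (s ∩ T) ≤ (P s)⁻¹ * P s :=
          mul_le_mul_right (measure_mono Set.inter_subset_left) _
        _ = 1 := ENNReal.inv_mul_cancel h0 (measure_ne_top P s)
  -- m0 ≤ m1
  have hm1n1 : m1 + n1 = 1 := by
    have h := hsplit Set.univ MeasurableSet.univ
    have hKK : {ω | y ω = 1} ∩ {ω | yknn ω = 1} ∪ {ω | y ω = 1} ∩ {ω | yknn ω = 0}
        = {ω | y ω = 1} ∩ Set.univ := by
      ext ω
      rcases fin2 (yknn ω) with h | h <;> simp [h]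
    have hdisj : Disjoint ({ω | y ω = 1} ∩ {ω | yknn ω = 1})
        ({ω | y ω = 1} ∩ {ω | yknn ω = 0}) := by
      apply Set.disjoint_left.2
      rintro ω ⟨-, h1⟩ ⟨-, h0⟩
      rw [Set.mem_setOf_eq] at h0 h1
      simp [h0] at h1
    have hsum : P ({ω | y ω = 1} ∩ {ω | yknn ω = 1})
        + P ({ω | y ω = 1} ∩ {ω | yknn ω = 0}) = 1/2 := by
      rw [← measure_union hdisj (hY1.inter hK0), hKK, Set.inter_univ, hbal1]
    rw [hmass1, hmass1] at hsum
    have h12 : (2:ℝ≥0∞) * (1/2) = 1 := by rw [mul_comm, htwo]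
    have hexp : (2:ℝ≥0∞) * (1/2 * m1 + 1/2 * n1) = m1 + n1 := by
      rw [mul_add, ← mul_assoc, ← mul_assoc, h12, one_mul, one_mul]
    calc m1 + n1 = 2 * (1/2 * m1 + 1/2 * n1) := hexp.symm
      _ = 2 * (1/2) := by rw [hsum]
      _ = 1 := h12
  have herr' : m0 + n1 ≤ 1 := by
    have hset : {ω | y ω = 0} ∩ {ω | yknn ω = 1} ∪ {ω | y ω = 1} ∩ {ω | yknn ω = 0}
        ⊆ {ω | yknn ω ≠ y ω} := by
      rintro ω (⟨h0, h1⟩ | ⟨h0, h1⟩) <;>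
        · rw [Set.mem_setOf_eq] at h0 h1
          simp [Set.mem_setOf_eq, h0, h1]
    have hdisj : Disjoint ({ω | y ω = 0} ∩ {ω | yknn ω = 1})
        ({ω | y ω = 1} ∩ {ω | yknn ω = 0}) := by
      apply Set.disjoint_left.2
      rintro ω ⟨h0, -⟩ ⟨h1, -⟩
      rw [Set.mem_setOf_eq] at h0 h1
      simp [h0] at h1
    have hsum : 1/2 * m0 + 1/2 * n1 ≤ 1/2 := by
      rw [← hmass0, ← hmass1, ← measure_union hdisj (hY1.inter hK0)]
      exact le_trans (measure_mono hset) herr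
    have h12 : (2:ℝ≥0∞) * (1/2) = 1 := by rw [mul_comm, htwo]
    have hexp : (2:ℝ≥0∞) * (1/2 * m0 + 1/2 * n1) = m0 + n1 := by
      rw [mul_add, ← mul_assoc, ← mul_assoc, h12, one_mul, one_mul]
    calc m0 + n1 = 2 * (1/2 * m0 + 1/2 * n1) := hexp.symm
      _ ≤ 2 * (1/2) := mul_le_mul_right hsum _
      _ = 1 := h12
  have hn1top : n1 ≠ ⊤ :=
    ne_top_of_le_ne_top one_ne_top (hcond_le_one _ _ hY1)
  have hm0m1 : m0 ≤ m1 := by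
    have : m0 + n1 ≤ m1 + n1 := by rw [hm1n1]; exact herr'
    exact ENNReal.add_le_add_iff_right hn1top |>.1 this
  -- masses of the key events
  have hY0S : P ({ω | y ω = 0} ∩ {ω | yhat ω = 1 ∧ yknn ω = 1}) = 1/2 * (a * m0) := by
    rw [hmass0, hcondind 0]
  have hY1S : P ({ω | y ω = 1} ∩ {ω | yhat ω = 1 ∧ yknn ω = 1}) = 1/2 * (b * m1) := by
    rw [hmass1, hcondind 1]
  have hY0H : P ({ω | y ω = 0} ∩ {ω | yhat ω = 1}) = 1/2 * a := hmass0 _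
  have hY1H : P ({ω | y ω = 1} ∩ {ω | yhat ω = 1}) = 1/2 * b := hmass1 _
  have hPS : P {ω | yhat ω = 1 ∧ yknn ω = 1} = 1/2 * (a * m0) + 1/2 * (b * m1) := by
    rw [hsplit _ hS, hY0S, hY1S]
  have hPH : P {ω | yhat ω = 1} = 1/2 * a + 1/2 * b := by
    rw [hsplit _ hH, hY0H, hY1H]
  -- put things in div form
  rw [hαS, hαnoisy, cond_apply hS, cond_apply hH, Set.inter_comm _ {ω | y ω = 0},
    Set.inter_comm _ {ω | y ω = 0}, hY0S, hY0H, ← ENNReal.div_eq_inv_mul, ← ENNReal.div_eq_inv_mul]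
  apply ennreal_div_le_div hpos_sub (measure_ne_top P _) hpos_yhat (measure_ne_top P _)
  rw [hPS, hPH]
  have key : a * m0 * (a + b) ≤ a * (a * m0 + b * m1) := by
    have h1 : a * m0 * (a + b) = a * (a * m0) + a * b * m0 := by ring
    have h2 : a * (a * m0 + b * m1) = a * (a * m0) + a * b * m1 := by ring
    rw [h1, h2]
    exact add_le_add_right (mul_le_mul_right hm0m1 _) _
  calc 1/2 * (a * m0) * (1/2 * a + 1/2 * b) = 1/2 * (1/2) * (a * m0 * (a + b)) := by ring
    _ ≤ 1/2 * (1/2) * (a * (a * m0 + b * m1)) := mul_le_mul_right key _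
    _ = 1/2 * a * (1/2 * (a * m0) + 1/2 * (b * m1)) := by ring
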